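/- arXiv:1503.06916 — 5 statements merged into one kernel-verified Lean document; each statement's English description precedes it below -/
import Mathlib

section
/- Let D₁ and D₂ be closed symmetric densely defined operators on a Hilbert space H such that Dom D₁ ∩ Dom D₂ is dense. Define D := (1/2)(D₁+D₂) + (i/2)(D₁−D₂) on Dom D₁ ∩ Dom D₂. Then D is closable: its adjoint D* is densely defined, and in fact Dom D* contains Dom D₁ ∩ Dom D₂, with D*ψ = (1/2)(D₁+D₂)ψ − (i/2)(D₁−D₂)ψ for all ψ ∈ Dom D₁ ∩ Dom D₂. -/
/-- The reverse Wick rotation `D = (1/2)(D₁+D₂) + (i/2)(D₁−D₂)` of a pair of closed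
symmetric densely defined operators is closable: its adjoint is densely defined, and in fact
`Dom D*` contains `Dom D₁ ∩ Dom D₂`, with `D*ψ = (1/2)(D₁+D₂)ψ − (i/2)(D₁−D₂)ψ` there. -/
theorem stmt_5 {H : Type*} [NormedAddCommGroup H] [InnerProductSpace ℂ H] [CompleteSpace H]
    (D₁ D₂ D : H →ₗ.[ℂ] H) (h₁c : D₁.IsClosed) (h₂c : D₂.IsClosed)
    (h₁dense : Dense (D₁.domain : Set H)) (h₂dense : Dense (D₂.domain : Set H))
    (h₁sym : ∀ x y : D₁.domain, (inner ℂ (D₁ x) (y : H) : ℂ) = inner ℂ (x : H) (D₁ y))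
    (h₂sym : ∀ x y : D₂.domain, (inner ℂ (D₂ x) (y : H) : ℂ) = inner ℂ (x : H) (D₂ y))
    (hdense : Dense ((D₁.domain ⊓ D₂.domain : Submodule ℂ H) : Set H))
    (hDdom : D.domain = D₁.domain ⊓ D₂.domain)
    (hDval : ∀ (x : H) (h1 : x ∈ D₁.domain) (h2 : x ∈ D₂.domain) (h : x ∈ D.domain),
      D ⟨x, h⟩ = ((1 : ℂ) / 2) • (D₁ ⟨x, h1⟩ + D₂ ⟨x, h2⟩)
        + (Complex.I / 2) • (D₁ ⟨x, h1⟩ - D₂ ⟨x, h2⟩)) :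
    Dense (D.adjoint.domain : Set H)
      ∧ ∀ (ψ : H) (h1 : ψ ∈ D₁.domain) (h2 : ψ ∈ D₂.domain),
          ∃ h : ψ ∈ D.adjoint.domain,
            D.adjoint ⟨ψ, h⟩ = ((1 : ℂ) / 2) • (D₁ ⟨ψ, h1⟩ + D₂ ⟨ψ, h2⟩)
              - (Complex.I / 2) • (D₁ ⟨ψ, h1⟩ - D₂ ⟨ψ, h2⟩) := by
  have hDd : Dense (D.domain : Set H) := by rw [hDdom]; exact hdense
  -- key inner product identity
  have key : ∀ (ψ : H) (h1 : ψ ∈ D₁.domain) (h2 : ψ ∈ D₂.domain) (x : D.domain),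
      (inner ℂ (((1 : ℂ) / 2) • (D₁ ⟨ψ, h1⟩ + D₂ ⟨ψ, h2⟩)
        - (Complex.I / 2) • (D₁ ⟨ψ, h1⟩ - D₂ ⟨ψ, h2⟩)) (x : H) : ℂ)
        = inner ℂ ψ (D x) := by
    intro ψ h1 h2 x
    have hx : (x : H) ∈ D₁.domain ⊓ D₂.domain := hDdom ▸ x.2
    have hx1 : (x : H) ∈ D₁.domain := hx.1
    have hx2 : (x : H) ∈ D₂.domain := hx.2
    have hxD : D x = ((1 : ℂ) / 2) • (D₁ ⟨x, hx1⟩ + D₂ ⟨x, hx2⟩)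
        + (Complex.I / 2) • (D₁ ⟨x, hx1⟩ - D₂ ⟨x, hx2⟩) := by
      have := hDval x hx1 hx2 x.2
      simpa using this
    rw [hxD]
    have e1 : (inner ℂ (D₁ ⟨ψ, h1⟩) (x : H) : ℂ) = inner ℂ ψ (D₁ ⟨x, hx1⟩) := h₁sym ⟨ψ, h1⟩ ⟨x, hx1⟩
    have e2 : (inner ℂ (D₂ ⟨ψ, h2⟩) (x : H) : ℂ) = inner ℂ ψ (D₂ ⟨x, hx2⟩) := h₂sym ⟨ψ, h2⟩ ⟨x, hx2⟩
    simp only [inner_sub_left, inner_add_left, inner_smul_left, inner_add_right, inner_smul_right,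
      inner_sub_right, e1, e2]
    simp only [map_div₀, Complex.conj_I, map_one, map_ofNat]
    ring
  have mem : ∀ (ψ : H) (h1 : ψ ∈ D₁.domain) (h2 : ψ ∈ D₂.domain), ψ ∈ D.adjoint.domain := by
    intro ψ h1 h2
    exact LinearPMap.mem_adjoint_domain_of_exists ψ
      ⟨((1 : ℂ) / 2) • (D₁ ⟨ψ, h1⟩ + D₂ ⟨ψ, h2⟩)
        - (Complex.I / 2) • (D₁ ⟨ψ, h1⟩ - D₂ ⟨ψ, h2⟩), key ψ h1 h2⟩
  constructor
  · refine hdense.mono ?_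
    rintro x ⟨hx1, hx2⟩
    exact mem x hx1 hx2
  · intro ψ h1 h2
    refine ⟨mem ψ h1 h2, ?_⟩
    exact LinearPMap.adjoint_apply_eq hDd _ (key ψ h1 h2)
end

section
/- Let D₁ and D₂ be closed symmetric densely defined operators on a Hilbert space H with Dom D₁ ∩ Dom D₂ dense, and let D be the reverse Wick rotation of (D₁, D₂). Then on Dom D₁ ∩ Dom D₂ the norms ‖·‖_{D,D*} and ‖·‖_{D₁,D₂} are equal: for all ψ ∈ Dom D₁ ∩ Dom D₂, ‖ψ‖² + ‖Dψ‖² + ‖D*ψ‖² = ‖ψ‖² + ‖D₁ψ‖² + ‖D₂ψ‖². -/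
/-- For the reverse Wick rotation `D` of `(D₁, D₂)`, the combined graph norms
`‖·‖_{D,D*}` and `‖·‖_{D₁,D₂}` agree on `Dom D₁ ∩ Dom D₂`. -/
theorem stmt_6 {H : Type*} [NormedAddCommGroup H] [InnerProductSpace ℂ H] [CompleteSpace H]
    (D₁ D₂ D : H →ₗ.[ℂ] H) (h₁c : D₁.IsClosed) (h₂c : D₂.IsClosed)
    (h₁dense : Dense (D₁.domain : Set H)) (h₂dense : Dense (D₂.domain : Set H))
    (h₁sym : ∀ x y : D₁.domain, (inner ℂ (D₁ x) (y : H) : ℂ) = inner ℂ (x : H) (D₁ y))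
    (h₂sym : ∀ x y : D₂.domain, (inner ℂ (D₂ x) (y : H) : ℂ) = inner ℂ (x : H) (D₂ y))
    (hdense : Dense ((D₁.domain ⊓ D₂.domain : Submodule ℂ H) : Set H))
    (hDdom : D.domain = D₁.domain ⊓ D₂.domain)
    (hDval : ∀ (x : H) (h1 : x ∈ D₁.domain) (h2 : x ∈ D₂.domain) (h : x ∈ D.domain),
      D ⟨x, h⟩ = ((1 : ℂ) / 2) • (D₁ ⟨x, h1⟩ + D₂ ⟨x, h2⟩)
        + (Complex.I / 2) • (D₁ ⟨x, h1⟩ - D₂ ⟨x, h2⟩)) :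
    ∀ (ψ : H) (h1 : ψ ∈ D₁.domain) (h2 : ψ ∈ D₂.domain),
      ∃ (hD : ψ ∈ D.domain) (hA : ψ ∈ D.adjoint.domain),
        ‖ψ‖ ^ 2 + ‖D ⟨ψ, hD⟩‖ ^ 2 + ‖D.adjoint ⟨ψ, hA⟩‖ ^ 2
          = ‖ψ‖ ^ 2 + ‖D₁ ⟨ψ, h1⟩‖ ^ 2 + ‖D₂ ⟨ψ, h2⟩‖ ^ 2 := by
  intro ψ h1 h2
  have hDdense : Dense (D.domain : Set H) := by rw [hDdom]; exact hdense
  have hD : ψ ∈ D.domain := by rw [hDdom]; exact Submodule.mem_inf.mpr ⟨h1, h2⟩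
  set a := D₁ ⟨ψ, h1⟩ with ha
  set b := D₂ ⟨ψ, h2⟩ with hb
  set η := ((1 : ℂ) / 2) • (a + b) - (Complex.I / 2) • (a - b) with hη
  have key : ∀ x : D.domain, (inner ℂ η (x : H) : ℂ) = inner ℂ ψ (D x) := by
    rintro ⟨x, hx⟩
    have hx' : x ∈ D₁.domain ⊓ D₂.domain := by rw [← hDdom]; exact hx
    have hx1 : x ∈ D₁.domain := (Submodule.mem_inf.mp hx').1
    have hx2 : x ∈ D₂.domain := (Submodule.mem_inf.mp hx').2
    have e1 : (inner ℂ a x : ℂ) = inner ℂ ψ (D₁ ⟨x, hx1⟩) := h₁sym ⟨ψ, h1⟩ ⟨x, hx1⟩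
    have e2 : (inner ℂ b x : ℂ) = inner ℂ ψ (D₂ ⟨x, hx2⟩) := h₂sym ⟨ψ, h2⟩ ⟨x, hx2⟩
    rw [hDval x hx1 hx2 hx, inner_add_right, inner_smul_right, inner_smul_right,
      inner_add_right, inner_sub_right, ← e1, ← e2, hη]
    simp only [inner_sub_left, inner_add_left, inner_smul_left, map_div₀, Complex.conj_I,
      map_one, map_ofNat]
    ring
  have hA : ψ ∈ D.adjoint.domain :=
    D.mem_adjoint_domain_of_exists ψ ⟨η, key⟩
  refine ⟨hD, hA, ?_⟩
  have hval : D.adjoint ⟨ψ, hA⟩ = η :=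
    LinearPMap.adjoint_apply_eq hDdense ⟨ψ, hA⟩ key
  have hDψ : D ⟨ψ, hD⟩ = ((1 : ℂ) / 2) • (a + b) + (Complex.I / 2) • (a - b) :=
    hDval ψ h1 h2 hD
  rw [hval, hDψ, hη]
  set u := ((1 : ℂ) / 2) • (a + b) with hu
  set v := (Complex.I / 2) • (a - b) with hv
  have hnu : ‖u‖ = (1 / 2) * ‖a + b‖ := by rw [hu, norm_smul]; simp
  have hnv : ‖v‖ = (1 / 2) * ‖a - b‖ := by
    rw [hv, norm_smul]; simp [norm_div, Complex.norm_I]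
  have hp1 := parallelogram_law_with_norm ℂ u v
  have hp2 := parallelogram_law_with_norm ℂ a b
  rw [hnu, hnv] at hp1
  simp only [pow_two]
  nlinarith [hp1, hp2]
end

section
/- Let S and T be self-adjoint operators on a Hilbert space H such that for every ξ in a dense subspace E and every nonzero real μ, (S−iμ)⁻¹ξ ∈ Dom S ∩ Dom T. Then S is essentially self-adjoint on Dom S ∩ Dom T. -/
open LinearPMap Filter Topology

local notation "⟪" x ", " y "⟫" => @inner ℂ _ _ x y

/-- If `S`, `T` are self-adjoint and the resolvents `(S−iμ)⁻¹` map a dense subspace `E`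
into `Dom S ∩ Dom T` for all nonzero real `μ`, then `S` is essentially self-adjoint
on `Dom S ∩ Dom T`, i.e. the closure of its restriction to `Dom S ∩ Dom T` equals `S`. -/
theorem stmt_7 {H : Type*} [NormedAddCommGroup H] [InnerProductSpace ℂ H] [CompleteSpace H]
    (S T : H →ₗ.[ℂ] H) (hS : IsSelfAdjoint S) (hT : IsSelfAdjoint T)
    (R : ℝ → H →L[ℂ] H)
    (hres₁ : ∀ μ : ℝ, μ ≠ 0 → ∀ x : H, ∃ h : R μ x ∈ S.domain,
      S ⟨R μ x, h⟩ - (Complex.I * (μ : ℂ)) • R μ x = x)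
    (hres₂ : ∀ μ : ℝ, μ ≠ 0 → ∀ (y : H) (hy : y ∈ S.domain),
      R μ (S ⟨y, hy⟩ - (Complex.I * (μ : ℂ)) • y) = y)
    (E : Submodule ℂ H) (hE : Dense (E : Set H))
    (hmap : ∀ μ : ℝ, μ ≠ 0 → ∀ ξ ∈ E, R μ ξ ∈ S.domain ⊓ T.domain) :
    (S.domRestrict (S.domain ⊓ T.domain)).closure = S := by
  have hS' : S† = S := hS
  have hdense : Dense (S.domain : Set H) := hS.dense_domain
  have hsym : ∀ x y : S.domain, ⟪(S x : H), (y : H)⟫ = ⟪(x : H), (S y : H)⟫ := by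
    have h := LinearPMap.adjoint_isFormalAdjoint (T := S) hdense
    rw [hS'] at h
    exact h
  set A := S.domRestrict (S.domain ⊓ T.domain) with hA
  -- S has closed graph
  have hclosed : IsClosed (S.graph : Set (H × H)) := by
    apply IsSeqClosed.isClosed
    intro u p hu hup
    choose w hw using fun n => S.mem_graph_iff.mp (hu n)
    have h1 : Tendsto (fun n => ((w n : H))) atTop (𝓝 p.1) := by
      have := (continuous_fst.tendsto p).comp hup
      refine this.congr fun n => ?_
      exact ((hw n).1).symm
    have h2 : Tendsto (fun n => (S (w n) : H)) atTop (𝓝 p.2) := by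
      have := (continuous_snd.tendsto p).comp hup
      refine this.congr fun n => ?_
      exact ((hw n).2).symm
    have key : ∀ v : S.domain, ⟪p.2, (v : H)⟫ = ⟪p.1, (S v : H)⟫ := by
      intro v
      have t1 : Tendsto (fun n => ⟪((w n : H)), (S v : H)⟫) atTop (𝓝 ⟪p.1, (S v : H)⟫) :=
        h1.inner tendsto_const_nhds
      have t2 : Tendsto (fun n => ⟪((w n : H)), (S v : H)⟫) atTop (𝓝 ⟪p.2, (v : H)⟫) := by
        refine (h2.inner (tendsto_const_nhds (x := (v : H)))).congr fun n => ?_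
        exact hsym (w n) v
      exact tendsto_nhds_unique t2 t1
    have hy : p.1 ∈ S.domain := by
      have : p.1 ∈ S†.domain :=
        S.mem_adjoint_domain_of_exists p.1 ⟨p.2, fun x => (key x).trans rfl⟩
      rwa [hS'] at this
    have hval : S ⟨p.1, hy⟩ = p.2 := by
      refine hdense.eq_of_inner_left ℂ fun w hw => ?_
      obtain ⟨v, rfl⟩ : ∃ v : S.domain, (v : H) = w := ⟨⟨w, hw⟩, rfl⟩
      rw [hsym ⟨p.1, hy⟩ v]
      exact (key v).symm
    exact S.mem_graph_iff.mpr ⟨⟨p.1, hy⟩, rfl, hval⟩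
  -- graph equality
  have hAle : A ≤ S := LinearPMap.domRestrict_le
  have hgraph : A.graph.topologicalClosure = S.graph := by
    refine le_antisymm
      (Submodule.topologicalClosure_minimal _ (LinearPMap.le_graph_of_le hAle) hclosed) ?_
    intro p hp
    obtain ⟨y, hy1, hy2⟩ := S.mem_graph_iff.mp hp
    set x : H := S y - (Complex.I * ((1 : ℝ) : ℂ)) • (y : H) with hx
    have hRx : R 1 x = (y : H) := by
      have := hres₂ 1 one_ne_zero (y : H) y.2
      simpa [hx] using this
    set f : H → H × H := fun z => (R 1 z, z + Complex.I • R 1 z) with hf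
    have hfc : Continuous f := by
      apply Continuous.prodMk (R 1).continuous
      exact continuous_id.add ((R 1).continuous.const_smul _)
    have himg : f '' (E : Set H) ⊆ (A.graph : Set (H × H)) := by
      rintro - ⟨ξ, hξ, rfl⟩
      obtain ⟨h, hval⟩ := hres₁ 1 one_ne_zero ξ
      have hmem : R 1 ξ ∈ S.domain ⊓ T.domain := hmap 1 one_ne_zero ξ hξ
      have hmemA : R 1 ξ ∈ A.domain := by
        rw [hA, LinearPMap.domRestrict_domain]
        exact ⟨hmem, h⟩
      rw [SetLike.mem_coe, A.mem_graph_iff]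
      refine ⟨⟨R 1 ξ, hmemA⟩, ?_⟩
      have hAv : A ⟨R 1 ξ, hmemA⟩ = S ⟨R 1 ξ, h⟩ := LinearPMap.domRestrict_apply rfl
      have : S ⟨R 1 ξ, h⟩ = ξ + Complex.I • R 1 ξ := by
        have := hval
        rw [sub_eq_iff_eq_add] at this
        rw [this]
        simp [add_comm]
      rw [hAv, this]
      exact ⟨rfl, rfl⟩
    have hfx : f x = p := by
      have hx2 : x + Complex.I • R 1 x = p.2 := by
        rw [hRx, hx, hy1, ← hy2]
        simp
      rw [hf]
      ext <;> simp only []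
      · rw [hRx, hy1]
      · exact hx2
    have hm1 : f x ∈ f '' closure (E : Set H) :=
      Set.mem_image_of_mem f (by rw [hE.closure_eq]; trivial)
    have hm2 : f x ∈ closure (f '' (E : Set H)) :=
      image_closure_subset_closure_image hfc hm1
    have hm3 : f x ∈ closure (A.graph : Set (H × H)) := closure_mono himg hm2
    rw [← SetLike.mem_coe, Submodule.topologicalClosure_coe]
    rwa [hfx] at hm3
  have hclosable : A.IsClosable := ⟨S, hgraph⟩
  apply LinearPMap.eq_of_eq_graph
  rw [← hclosable.graph_closure_eq_closure_graph, hgraph]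
end

section
/- Let D be a closed densely defined operator on a Hilbert space H, let E ⊆ Dom D ∩ Dom D* be dense with respect to the norm ‖·‖_{D,D*}, and let a be a bounded operator on H such that a and a* map E into Dom D ∩ Dom D*, and such that the commutators [D,a] and [D*,a] are bounded on E. Then a maps all of Dom D ∩ Dom D* into Dom D ∩ Dom D*. -/
open Filter Topology

/-- Auxiliary: Cauchy-ness of `n ↦ T (a (φ n))` from a commutator bound. -/
lemma aux_cauchy {H : Type*} [NormedAddCommGroup H] [InnerProductSpace ℂ H]
    (T : H →ₗ.[ℂ] H) (a : H →L[ℂ] H) (E : Submodule ℂ H)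
    (hmem : ∀ x ∈ E, a x ∈ T.domain) (hmem' : ∀ x ∈ E, x ∈ T.domain)
    (φ : ℕ → H) (hφE : ∀ n, φ n ∈ E)
    (hφC : CauchySeq φ)
    (hTφ : CauchySeq (fun n => T ⟨φ n, hmem' _ (hφE n)⟩))
    (C : ℝ)
    (hC : ∀ (x : H) (hx : x ∈ E),
      ‖T ⟨a x, hmem x hx⟩ - a (T ⟨x, hmem' x hx⟩)‖ ≤ C * ‖x‖) :
    CauchySeq (fun n => T ⟨a (φ n), hmem _ (hφE n)⟩) := by
  set c : ℕ → H := fun n => T ⟨a (φ n), hmem _ (hφE n)⟩ - a (T ⟨φ n, hmem' _ (hφE n)⟩) with hc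
  have hcC : CauchySeq c := by
    rw [Metric.cauchySeq_iff] at hφC ⊢
    intro ε hε
    set K : ℝ := max C 1 with hK
    have hK0 : (0:ℝ) < K := lt_of_lt_of_le one_pos (le_max_right _ _)
    obtain ⟨N, hN⟩ := hφC (ε / K) (by positivity)
    refine ⟨N, fun m hm n hn => ?_⟩
    have hsub : φ m - φ n ∈ E := E.sub_mem (hφE m) (hφE n)
    have hb := hC (φ m - φ n) hsub
    have e1 : (⟨a (φ m - φ n), hmem _ hsub⟩ : T.domain)
        = ⟨a (φ m), hmem _ (hφE m)⟩ - ⟨a (φ n), hmem _ (hφE n)⟩ := by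
      ext; simp
    have e2 : (⟨φ m - φ n, hmem' _ hsub⟩ : T.domain)
        = ⟨φ m, hmem' _ (hφE m)⟩ - ⟨φ n, hmem' _ (hφE n)⟩ := rfl
    rw [e1, e2, T.map_sub, T.map_sub, map_sub] at hb
    have hdiff : c m - c n =
        (T ⟨a (φ m), hmem _ (hφE m)⟩ - T ⟨a (φ n), hmem _ (hφE n)⟩)
          - (a (T ⟨φ m, hmem' _ (hφE m)⟩) - a (T ⟨φ n, hmem' _ (hφE n)⟩)) := by
      simp only [hc]; abel
    have hφd := hN m hm n hn
    rw [dist_eq_norm] at hφd ⊢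
    calc ‖c m - c n‖ ≤ C * ‖φ m - φ n‖ := by rw [hdiff]; exact hb
      _ ≤ K * ‖φ m - φ n‖ :=
          mul_le_mul_of_nonneg_right (le_max_left _ _) (norm_nonneg _)
      _ < K * (ε / K) := by
          exact mul_lt_mul_of_pos_left hφd hK0
      _ = ε := by field_simp
  have haTφ : CauchySeq (fun n => a (T ⟨φ n, hmem' _ (hφE n)⟩)) :=
    a.uniformContinuous.comp_cauchySeq hTφ
  have := hcC.add haTφ
  convert this using 1
  funext n
  simp only [hc, Pi.add_apply]
  abel

/-- If a bounded operator `a` and its adjoint map a subspace `E` ⊆ `Dom D ∩ Dom D*`,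
dense in the combined graph norm, into `Dom D ∩ Dom D*`, with `[D,a]` and `[D*,a]`
bounded on `E`, then `a` preserves all of `Dom D ∩ Dom D*`. -/
theorem stmt_11 {H : Type*} [NormedAddCommGroup H] [InnerProductSpace ℂ H] [CompleteSpace H]
    (D : H →ₗ.[ℂ] H) (hD : D.IsClosed) (hDdense : Dense (D.domain : Set H))
    (E : Submodule ℂ H) (hES : ∀ φ ∈ E, φ ∈ D.domain) (hEA : ∀ φ ∈ E, φ ∈ D.adjoint.domain)
    (hEdense : ∀ (ψ : H) (hψD : ψ ∈ D.domain) (hψA : ψ ∈ D.adjoint.domain), ∀ ε : ℝ, 0 < ε →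
      ∃ (φ : H) (hφ : φ ∈ E),
        ‖ψ - φ‖ ^ 2 + ‖D ⟨ψ - φ, D.domain.sub_mem hψD (hES φ hφ)⟩‖ ^ 2
          + ‖D.adjoint ⟨ψ - φ, D.adjoint.domain.sub_mem hψA (hEA φ hφ)⟩‖ ^ 2 < ε)
    (a : H →L[ℂ] H)
    (haD : ∀ φ ∈ E, a φ ∈ D.domain) (haA : ∀ φ ∈ E, a φ ∈ D.adjoint.domain)
    (hastD : ∀ φ ∈ E, ContinuousLinearMap.adjoint a φ ∈ D.domain)
    (hastA : ∀ φ ∈ E, ContinuousLinearMap.adjoint a φ ∈ D.adjoint.domain)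
    (hcommD : ∃ C : ℝ, ∀ (φ : H) (hφ : φ ∈ E),
      ‖D ⟨a φ, haD φ hφ⟩ - a (D ⟨φ, hES φ hφ⟩)‖ ≤ C * ‖φ‖)
    (hcommA : ∃ C : ℝ, ∀ (φ : H) (hφ : φ ∈ E),
      ‖D.adjoint ⟨a φ, haA φ hφ⟩ - a (D.adjoint ⟨φ, hEA φ hφ⟩)‖ ≤ C * ‖φ‖) :
    ∀ ψ : H, ψ ∈ D.domain → ψ ∈ D.adjoint.domain →
      a ψ ∈ D.domain ∧ a ψ ∈ D.adjoint.domain := by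
  intro ψ hψD hψA
  classical
  choose φ hφE hφ using fun n : ℕ =>
    hEdense ψ hψD hψA (1 / (n + 1)) (by positivity)
  set δ : ℕ → ℝ := fun n => Real.sqrt (1 / (n + 1)) with hδdef
  have hδ0 : Tendsto δ atTop (𝓝 0) := by
    have h1 : Tendsto (fun n : ℕ => 1 / ((n : ℝ) + 1)) atTop (𝓝 0) :=
      tendsto_one_div_add_atTop_nhds_zero_nat
    have h2 := (Real.continuous_sqrt.tendsto 0).comp h1
    simp only [Real.sqrt_zero] at h2
    exact h2
  -- individual bounds
  have key : ∀ n : ℕ, ‖ψ - φ n‖ ≤ δ n ∧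
      ‖D ⟨ψ, hψD⟩ - D ⟨φ n, hES _ (hφE n)⟩‖ ≤ δ n ∧
      ‖D.adjoint ⟨ψ, hψA⟩ - D.adjoint ⟨φ n, hEA _ (hφE n)⟩‖ ≤ δ n := by
    intro n
    have h := hφ n
    have e2 : D ⟨ψ - φ n, D.domain.sub_mem hψD (hES _ (hφE n))⟩
        = D ⟨ψ, hψD⟩ - D ⟨φ n, hES _ (hφE n)⟩ := by
      rw [show (⟨ψ - φ n, D.domain.sub_mem hψD (hES _ (hφE n))⟩ : D.domain)
        = ⟨ψ, hψD⟩ - ⟨φ n, hES _ (hφE n)⟩ from rfl, D.map_sub]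
    have e3 : D.adjoint ⟨ψ - φ n, D.adjoint.domain.sub_mem hψA (hEA _ (hφE n))⟩
        = D.adjoint ⟨ψ, hψA⟩ - D.adjoint ⟨φ n, hEA _ (hφE n)⟩ := by
      rw [show (⟨ψ - φ n, D.adjoint.domain.sub_mem hψA (hEA _ (hφE n))⟩ : D.adjoint.domain)
        = ⟨ψ, hψA⟩ - ⟨φ n, hEA _ (hφE n)⟩ from rfl, D.adjoint.map_sub]
    rw [e2, e3] at h
    have sq1 : ‖ψ - φ n‖ ^ 2 ≤ 1 / (n + 1) := by nlinarith [sq_nonneg ‖D ⟨ψ, hψD⟩ - D ⟨φ n, hES _ (hφE n)⟩‖, sq_nonneg ‖D.adjoint ⟨ψ, hψA⟩ - D.adjoint ⟨φ n, hEA _ (hφE n)⟩‖]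
    have sq2 : ‖D ⟨ψ, hψD⟩ - D ⟨φ n, hES _ (hφE n)⟩‖ ^ 2 ≤ 1 / (n + 1) := by nlinarith [sq_nonneg ‖ψ - φ n‖, sq_nonneg ‖D.adjoint ⟨ψ, hψA⟩ - D.adjoint ⟨φ n, hEA _ (hφE n)⟩‖]
    have sq3 : ‖D.adjoint ⟨ψ, hψA⟩ - D.adjoint ⟨φ n, hEA _ (hφE n)⟩‖ ^ 2 ≤ 1 / (n + 1) := by nlinarith [sq_nonneg ‖ψ - φ n‖, sq_nonneg ‖D ⟨ψ, hψD⟩ - D ⟨φ n, hES _ (hφE n)⟩‖]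
    refine ⟨?_, ?_, ?_⟩ <;>
      exact (Real.le_sqrt (norm_nonneg _) (by positivity)).mpr (by assumption)
  -- convergence of the sequences
  have hφlim : Tendsto (fun n => φ n) atTop (𝓝 ψ) := by
    rw [tendsto_iff_norm_sub_tendsto_zero]
    refine squeeze_zero (fun n => norm_nonneg _) (fun n => ?_) hδ0
    rw [norm_sub_rev]; exact (key n).1
  have hDφlim : Tendsto (fun n => D ⟨φ n, hES _ (hφE n)⟩) atTop (𝓝 (D ⟨ψ, hψD⟩)) := by
    rw [tendsto_iff_norm_sub_tendsto_zero]
    refine squeeze_zero (fun n => norm_nonneg _) (fun n => ?_) hδ0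
    rw [norm_sub_rev]; exact (key n).2.1
  have hAφlim : Tendsto (fun n => D.adjoint ⟨φ n, hEA _ (hφE n)⟩) atTop
      (𝓝 (D.adjoint ⟨ψ, hψA⟩)) := by
    rw [tendsto_iff_norm_sub_tendsto_zero]
    refine squeeze_zero (fun n => norm_nonneg _) (fun n => ?_) hδ0
    rw [norm_sub_rev]; exact (key n).2.2
  have haφlim : Tendsto (fun n => a (φ n)) atTop (𝓝 (a ψ)) :=
    (a.continuous.tendsto ψ).comp hφlim
  -- Cauchy sequences of images
  obtain ⟨C₁, hC₁⟩ := hcommD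
  obtain ⟨C₂, hC₂⟩ := hcommA
  have huC : CauchySeq (fun n => D ⟨a (φ n), haD _ (hφE n)⟩) :=
    aux_cauchy D a E haD hES φ hφE hφlim.cauchySeq hDφlim.cauchySeq C₁ hC₁
  have hvC : CauchySeq (fun n => D.adjoint ⟨a (φ n), haA _ (hφE n)⟩) :=
    aux_cauchy D.adjoint a E haA hEA φ hφE hφlim.cauchySeq hAφlim.cauchySeq C₂ hC₂
  obtain ⟨ξ, hξ⟩ := cauchySeq_tendsto_of_complete huC
  obtain ⟨η, hη⟩ := cauchySeq_tendsto_of_complete hvC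
  constructor
  · -- membership in D.domain via closedness of the graph
    have hmem : (a ψ, ξ) ∈ D.graph := by
      have hcl : IsClosed (D.graph : Set (H × H)) := hD
      exact hcl.mem_of_tendsto (haφlim.prodMk_nhds hξ)
        (Filter.Eventually.of_forall fun n => D.mem_graph ⟨a (φ n), haD _ (hφE n)⟩)
    exact D.mem_domain_of_mem_graph hmem
  · -- membership in D.adjoint.domain via the formal adjoint property
    refine LinearPMap.mem_adjoint_domain_of_exists _ ⟨η, fun x => ?_⟩
    have hform := LinearPMap.adjoint_isFormalAdjoint hDdense
    have h1 : Tendsto (fun n => (inner ℂ (D.adjoint ⟨a (φ n), haA _ (hφE n)⟩) (x : H) : ℂ))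
        atTop (𝓝 (inner ℂ η (x : H))) := hη.inner tendsto_const_nhds
    have h2 : Tendsto (fun n => (inner ℂ (a (φ n)) (D x) : ℂ))
        atTop (𝓝 (inner ℂ (a ψ) (D x))) := haφlim.inner tendsto_const_nhds
    have heq : (fun n => (inner ℂ (D.adjoint ⟨a (φ n), haA _ (hφE n)⟩) (x : H) : ℂ))
        = fun n => (inner ℂ (a (φ n)) (D x) : ℂ) := by
      funext n
      exact hform ⟨a (φ n), haA _ (hφE n)⟩ x
    rw [heq] at h1
    exact tendsto_nhds_unique h1 h2
end

section
/- Let D be a symmetric densely defined operator on a Hilbert space H such that D² (defined on {ψ ∈ Dom D : Dψ ∈ Dom D}) is essentially self-adjoint. Then D is essentially self-adjoint. -/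
open LinearPMap

section Aux

variable {H : Type*} [NormedAddCommGroup H] [InnerProductSpace ℂ H] [CompleteSpace H]

local notation "⟪" x ", " y "⟫" => @inner ℂ _ _ x y

/-- The adjoint of a densely defined operator is closed. -/
lemma aux_adjoint_isClosed (T : H →ₗ.[ℂ] H) (hT : Dense (T.domain : Set H)) :
    T.adjoint.IsClosed := by
  have hset : (T.adjoint.graph : Set (H × H)) =
      ⋂ (x : T.domain), {p : H × H | ⟪p.2, (x : H)⟫ = ⟪p.1, T x⟫} := by
    ext ⟨v, w⟩
    simp only [Set.mem_iInter, Set.mem_setOf_eq, SetLike.mem_coe]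
    constructor
    · intro hvw x
      rw [mem_graph_iff] at hvw
      obtain ⟨y, hy⟩ := hvw
      obtain ⟨hy1, hy2⟩ := hy
      simp only at hy1 hy2
      subst hy1; subst hy2
      exact adjoint_isFormalAdjoint hT y x
    · intro h
      have hv : v ∈ T.adjoint.domain :=
        mem_adjoint_domain_of_exists v ⟨w, fun x => h x⟩
      have hval : T.adjoint ⟨v, hv⟩ = w :=
        adjoint_apply_eq hT _ (fun x => h x)
      rw [mem_graph_iff]
      exact ⟨⟨v, hv⟩, by simp [hval]⟩
  rw [LinearPMap.IsClosed, hset]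
  refine isClosed_iInter fun x => isClosed_eq ?_ ?_
  · exact (continuous_snd.inner continuous_const)
  · exact (continuous_fst.inner continuous_const)

omit [CompleteSpace H] in
lemma aux_closure_graph_subset (T : H →ₗ.[ℂ] H) :
    (T.closure.graph : Set (H × H)) ⊆ closure (T.graph : Set (H × H)) := by
  by_cases h : T.IsClosable
  · rw [← h.graph_closure_eq_closure_graph, Submodule.topologicalClosure_coe]
  · rw [T.closure_def' h]
    exact subset_closure

omit [CompleteSpace H] in
/-- Norm identity. -/
lemma aux_norm_sq (a x : H) (h : ⟪a, x⟫ = ⟪x, a⟫) :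
    ‖a + Complex.I • x‖ ^ 2 = ‖a‖ ^ 2 + ‖x‖ ^ 2 := by
  have h2 := @norm_add_sq ℂ _ _ _ _ a (Complex.I • x)
  have hre : RCLike.re ⟪a, Complex.I • x⟫ = 0 := by
    rw [inner_smul_right]
    have him : (⟪a, x⟫).im = 0 := by
      have : (starRingEnd ℂ) ⟪a, x⟫ = ⟪a, x⟫ := (inner_conj_symm x a).trans h.symm
      exact Complex.conj_eq_iff_im.mp this
    simp only [RCLike.re_to_complex, Complex.mul_re, Complex.I_re, Complex.I_im]
    simp [him]
  rw [h2, hre]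
  simp [norm_smul]

end Aux

/-- If `D` is a densely defined symmetric operator whose square `D²` (on
`{ψ ∈ Dom D : Dψ ∈ Dom D}`) is essentially self-adjoint, then `D` is essentially
self-adjoint. -/
theorem stmt_17 {H : Type*} [NormedAddCommGroup H] [InnerProductSpace ℂ H] [CompleteSpace H]
    (D : H →ₗ.[ℂ] H) (hDdense : Dense (D.domain : Set H))
    (hsym : ∀ x y : D.domain, (inner ℂ (D x) (y : H) : ℂ) = inner ℂ (x : H) (D y))
    (D2 : H →ₗ.[ℂ] H)
    (hD2dom : ∀ x : H, x ∈ D2.domain ↔ ∃ h : x ∈ D.domain, D ⟨x, h⟩ ∈ D.domain)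
    (hD2val : ∀ (x : H) (h : x ∈ D.domain) (h' : D ⟨x, h⟩ ∈ D.domain) (hx : x ∈ D2.domain),
      D2 ⟨x, hx⟩ = D ⟨D ⟨x, h⟩, h'⟩)
    (hD2 : IsSelfAdjoint D2.closure) :
    IsSelfAdjoint D.closure := by
  classical
  have hDsym : D.IsFormalAdjoint D := fun x y => hsym x y
  have hDadj : D ≤ D.adjoint := hDsym.le_adjoint hDdense
  have hclosable : D.IsClosable :=
    LinearPMap.isClosable_iff_exists_closed_extension.mpr
      ⟨D.adjoint, aux_adjoint_isClosed D hDdense, hDadj⟩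
  have hTclosed : D.closure.IsClosed := hclosable.closure_isClosed
  have hDT : D ≤ D.closure := D.le_closure
  have hTdense : Dense (D.closure.domain : Set H) := hDdense.mono hDT.1
  have hTgr : (D.closure.graph : Set (H × H)) ⊆ closure (D.graph : Set (H × H)) :=
    aux_closure_graph_subset D
  -- Symmetry of the closure
  have hsymDT : ∀ q ∈ (D.graph : Set (H × H)), ∀ p ∈ (D.closure.graph : Set (H × H)),
      (inner ℂ p.2 q.1 : ℂ) = inner ℂ p.1 q.2 := by
    intro q hq
    have hsub : (D.graph : Set (H × H)) ⊆
        {p : H × H | (inner ℂ p.2 q.1 : ℂ) = inner ℂ p.1 q.2} := by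
      intro r hr
      rw [SetLike.mem_coe, mem_graph_iff] at hr hq
      obtain ⟨u, hu1, hu2⟩ := hr
      obtain ⟨u', hu'1, hu'2⟩ := hq
      simp only [Set.mem_setOf_eq]
      rw [← hu1, ← hu2, ← hu'1, ← hu'2]
      exact hsym u u'
    have hclosed : IsClosed {p : H × H | (inner ℂ p.2 q.1 : ℂ) = inner ℂ p.1 q.2} :=
      isClosed_eq (continuous_snd.inner continuous_const)
        (continuous_fst.inner continuous_const)
    intro p hp
    exact (closure_minimal hsub hclosed) (hTgr hp)
  have hsymTT : ∀ p ∈ (D.closure.graph : Set (H × H)), ∀ q ∈ (D.closure.graph : Set (H × H)),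
      (inner ℂ p.2 q.1 : ℂ) = inner ℂ p.1 q.2 := by
    intro p hp
    have hsub : (D.graph : Set (H × H)) ⊆
        {q : H × H | (inner ℂ p.2 q.1 : ℂ) = inner ℂ p.1 q.2} := fun q hq => hsymDT q hq p hp
    have hclosed : IsClosed {q : H × H | (inner ℂ p.2 q.1 : ℂ) = inner ℂ p.1 q.2} :=
      isClosed_eq (continuous_const.inner continuous_fst)
        (continuous_const.inner continuous_snd)
    intro q hq
    exact (closure_minimal hsub hclosed) (hTgr hq)
  have hTsym : ∀ x y : D.closure.domain,
      (inner ℂ (D.closure x) (y : H) : ℂ) = inner ℂ (x : H) (D.closure y) :=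
    fun x y => hsymTT _ (D.closure.mem_graph x) _ (D.closure.mem_graph y)
  -- Key density lemma from essential self-adjointness of D².
  have hker : ∀ v : H, (∀ u : D2.domain, (inner ℂ v ((D2 u : H) + (u : H)) : ℂ) = 0) → v = 0 := by
    intro v hv
    have hAdense : Dense (D2.closure.domain : Set H) := hD2.dense_domain
    have hAeq : D2.closure.adjoint = D2.closure := LinearPMap.isSelfAdjoint_def.mp hD2
    have hS : ∀ p ∈ (D2.closure.graph : Set (H × H)), (inner ℂ v p.2 : ℂ) = inner ℂ (-v) p.1 := by
      have hsub : (D2.graph : Set (H × H)) ⊆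
          {p : H × H | (inner ℂ v p.2 : ℂ) = inner ℂ (-v) p.1} := by
        intro r hr
        rw [SetLike.mem_coe, mem_graph_iff] at hr
        obtain ⟨u, hu1, hu2⟩ := hr
        simp only [Set.mem_setOf_eq]
        rw [← hu1, ← hu2]
        have h0 := hv u
        rw [inner_add_right] at h0
        rw [inner_neg_left]
        linear_combination h0
      have hclosed : IsClosed {p : H × H | (inner ℂ v p.2 : ℂ) = inner ℂ (-v) p.1} :=
        isClosed_eq (continuous_const.inner continuous_snd)
          (continuous_const.inner continuous_fst)
      intro p hp
      exact (closure_minimal hsub hclosed) (aux_closure_graph_subset D2 hp)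
    have hvdom : v ∈ D2.closure.adjoint.domain :=
      mem_adjoint_domain_of_exists v ⟨-v, fun x => (hS _ (D2.closure.mem_graph x)).symm⟩
    have hval : D2.closure.adjoint ⟨v, hvdom⟩ = -v :=
      adjoint_apply_eq hAdense _ (fun x => (hS _ (D2.closure.mem_graph x)).symm)
    have hgrv : (v, -v) ∈ D2.closure.adjoint.graph := by
      simpa [hval] using D2.closure.adjoint.mem_graph ⟨v, hvdom⟩
    rw [hAeq] at hgrv
    obtain ⟨u, hu1, hu2⟩ := (LinearPMap.mem_graph_iff _).mp hgrv
    have hpos : ∀ p ∈ (D2.closure.graph : Set (H × H)), 0 ≤ RCLike.re (inner ℂ p.1 p.2 : ℂ) := by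
      have hsub : (D2.graph : Set (H × H)) ⊆
          {p : H × H | 0 ≤ RCLike.re (inner ℂ p.1 p.2 : ℂ)} := by
        intro r hr
        rw [SetLike.mem_coe, mem_graph_iff] at hr
        obtain ⟨w, hw1, hw2⟩ := hr
        simp only [Set.mem_setOf_eq]
        rw [← hw1, ← hw2]
        obtain ⟨h1, h2⟩ := (hD2dom (w : H)).mp w.2
        have hw : D2 w = D ⟨D ⟨(w : H), h1⟩, h2⟩ := by
          have := hD2val (w : H) h1 h2 w.2
          simpa using this
        rw [hw]
        have h3 := hsym ⟨(w : H), h1⟩ ⟨D ⟨(w : H), h1⟩, h2⟩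
        rw [← h3]
        exact inner_self_nonneg
      have hclosed : IsClosed {p : H × H | 0 ≤ RCLike.re (inner ℂ p.1 p.2 : ℂ)} :=
        isClosed_le continuous_const
          ((RCLike.continuous_re).comp (continuous_fst.inner continuous_snd))
      intro p hp
      exact (closure_minimal hsub hclosed) (aux_closure_graph_subset D2 hp)
    have h0 : 0 ≤ RCLike.re (inner ℂ v (-v) : ℂ) := by
      have := hpos _ (D2.closure.mem_graph u)
      rw [hu1, hu2] at this
      exact this
    rw [inner_neg_right, _root_.map_neg, inner_self_eq_norm_sq] at h0
    have hnv : ‖v‖ = 0 := by nlinarith [norm_nonneg v]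
    exact norm_eq_zero.mp hnv
  -- The range of (T + i) is all of H.
  have hrange : ∀ w : H, ∃ x : D.closure.domain,
      (D.closure x : H) + Complex.I • (x : H) = w := by
    intro w
    set R : Set H :=
      Set.range (fun x : D.closure.domain => (D.closure x : H) + Complex.I • (x : H)) with hR
    suffices hRuniv : R = Set.univ by
      have : w ∈ R := hRuniv ▸ Set.mem_univ w
      exact this
    have hclosedR : IsClosed R := by
      apply IsSeqClosed.isClosed
      intro f w' hf hfw
      choose x hx using hf
      have hfc : CauchySeq f := hfw.cauchySeq
      have key : ∀ n m : ℕ, dist ((x n : H)) ((x m : H)) ≤ dist (f n) (f m) ∧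
          dist ((D.closure (x n) : H)) (D.closure (x m)) ≤ dist (f n) (f m) := by
        intro n m
        have hd : f n - f m =
            (D.closure (x n - x m) : H) + Complex.I • ((x n - x m : D.closure.domain) : H) := by
          rw [← hx n, ← hx m, LinearPMap.map_sub]
          push_cast
          module
        have hid := aux_norm_sq (D.closure (x n - x m)) ((x n - x m : D.closure.domain) : H)
          (hTsym (x n - x m) (x n - x m))
        rw [← hd] at hid
        have hcoe : ((x n - x m : D.closure.domain) : H) = (x n : H) - (x m : H) := rfl
        have hmap : (D.closure (x n - x m) : H) = (D.closure (x n) : H) - D.closure (x m) := by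
          rw [LinearPMap.map_sub]
        rw [hcoe, hmap] at hid
        constructor
        · rw [dist_eq_norm, dist_eq_norm]
          nlinarith [norm_nonneg ((x n : H) - (x m : H)), norm_nonneg (f n - f m),
            norm_nonneg ((D.closure (x n) : H) - D.closure (x m))]
        · rw [dist_eq_norm, dist_eq_norm]
          nlinarith [norm_nonneg ((x n : H) - (x m : H)), norm_nonneg (f n - f m),
            norm_nonneg ((D.closure (x n) : H) - D.closure (x m))]
      have hc1 : CauchySeq (fun n => ((x n : H))) := by
        rw [Metric.cauchySeq_iff] at hfc ⊢
        intro ε hε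
        obtain ⟨N, hN⟩ := hfc ε hε
        exact ⟨N, fun m hm n hn => lt_of_le_of_lt (key m n).1 (hN m hm n hn)⟩
      have hc2 : CauchySeq (fun n => ((D.closure (x n) : H))) := by
        rw [Metric.cauchySeq_iff] at hfc ⊢
        intro ε hε
        obtain ⟨N, hN⟩ := hfc ε hε
        exact ⟨N, fun m hm n hn => lt_of_le_of_lt (key m n).2 (hN m hm n hn)⟩
      obtain ⟨a, ha⟩ := cauchySeq_tendsto_of_complete hc1
      obtain ⟨b, hb⟩ := cauchySeq_tendsto_of_complete hc2
      have hgr : (a, b) ∈ D.closure.graph := by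
        have htend : Filter.Tendsto (fun n => (((x n : H)), (D.closure (x n) : H)))
            Filter.atTop (nhds (a, b)) := ha.prodMk_nhds hb
        exact hTclosed.mem_of_tendsto htend
          (Filter.Eventually.of_forall fun n => D.closure.mem_graph (x n))
      obtain ⟨y, hy1, hy2⟩ := (LinearPMap.mem_graph_iff _).mp hgr
      refine ⟨y, ?_⟩
      show (D.closure y : H) + Complex.I • (y : H) = w'
      have hfeq : f = fun n => (D.closure (x n) : H) + Complex.I • ((x n : H)) :=
        funext fun n => (hx n).symm
      have hlim : Filter.Tendsto f Filter.atTop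
          (nhds ((b : H) + Complex.I • a)) := by
        rw [hfeq]
        exact hb.add (ha.const_smul Complex.I)
      rw [hy2, hy1]
      exact tendsto_nhds_unique hlim hfw
    have hdenseR : Dense R := by
      let L : D.closure.domain →ₗ[ℂ] H :=
        D.closure.toFun + Complex.I • (D.closure.domain.subtype)
      have hRL : R = (LinearMap.range L : Set H) := by
        ext w'
        simp only [hR, Set.mem_range, SetLike.mem_coe, LinearMap.mem_range]
        rfl
      rw [hRL]
      rw [Submodule.dense_iff_topologicalClosure_eq_top,
        Submodule.topologicalClosure_eq_top_iff]
      rw [Submodule.eq_bot_iff]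
      intro v hv
      rw [Submodule.mem_orthogonal] at hv
      apply hker
      have hvT : ∀ u : D.closure.domain,
          (inner ℂ v (D.closure u : H) : ℂ) = -Complex.I * inner ℂ v (u : H) := by
        intro u
        have h0 : (inner ℂ ((D.closure u : H) + Complex.I • (u : H)) v : ℂ) = 0 :=
          hv _ (LinearMap.mem_range.mpr ⟨u, rfl⟩)
        have h0' : (inner ℂ v ((D.closure u : H) + Complex.I • (u : H)) : ℂ) = 0 := by
          rw [← inner_conj_symm, h0, _root_.map_zero]
        rw [inner_add_right, inner_smul_right] at h0'
        linear_combination h0'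
      intro u
      obtain ⟨h1, h2⟩ := (hD2dom (u : H)).mp u.2
      have hwk : D2 u = D ⟨D ⟨(u : H), h1⟩, h2⟩ := by
        simpa using hD2val (u : H) h1 h2 u.2
      have e1 : (D ⟨(u : H), h1⟩ : H) = D.closure ⟨(u : H), hDT.1 h1⟩ := hDT.2 rfl
      have e2 : (D ⟨D ⟨(u : H), h1⟩, h2⟩ : H) =
          D.closure ⟨(D ⟨(u : H), h1⟩ : H), hDT.1 h2⟩ := hDT.2 rfl
      rw [inner_add_right, hwk, e2, hvT ⟨_, hDT.1 h2⟩]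
      have e3 : (inner ℂ v (D ⟨(u : H), h1⟩ : H) : ℂ) = -Complex.I * inner ℂ v (u : H) := by
        rw [e1, hvT ⟨_, hDT.1 h1⟩]
      rw [show ((⟨(D ⟨(u : H), h1⟩ : H), hDT.1 h2⟩ : D.closure.domain) : H) =
        (D ⟨(u : H), h1⟩ : H) from rfl, e3]
      linear_combination (Complex.I_mul_I) * (inner ℂ v (u : H) : ℂ)
    rw [← hclosedR.closure_eq]
    exact hdenseR.closure_eq
  -- Conclusion
  have hTsym' : D.closure.IsFormalAdjoint D.closure := fun x y => hTsym x y
  have h1 : D.closure ≤ D.closure.adjoint := hTsym'.le_adjoint hTdense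
  have h2 : D.closure.adjoint ≤ D.closure := by
    apply le_of_le_graph
    intro p hp
    obtain ⟨y, hy1, hy2⟩ := (LinearPMap.mem_graph_iff _).mp hp
    obtain ⟨x, hx⟩ := hrange ((D.closure.adjoint y : H) + Complex.I • (y : H))
    have hveq : (y : H) - (x : H) = 0 := by
      apply hker
      have hvT : ∀ u : D.closure.domain,
          (inner ℂ ((y : H) - (x : H)) (D.closure u : H) : ℂ) =
            Complex.I * inner ℂ ((y : H) - (x : H)) (u : H) := by
        intro u
        have e1 : (inner ℂ (y : H) (D.closure u : H) : ℂ) = inner ℂ (D.closure.adjoint y : H) (u : H) :=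
          (adjoint_isFormalAdjoint hTdense y u).symm
        have e2 : (inner ℂ (x : H) (D.closure u : H) : ℂ) = inner ℂ (D.closure x : H) (u : H) :=
          (hTsym x u).symm
        have e4 : (D.closure.adjoint y : H) - (D.closure x : H) =
            Complex.I • ((x : H) - (y : H)) := by
          rw [smul_sub, sub_eq_sub_iff_add_eq_add]
          exact hx.symm.trans (add_comm _ _)
        rw [inner_sub_left, e1, e2, ← inner_sub_left, e4]
        rw [inner_smul_left]
        simp only [Complex.conj_I]
        rw [inner_sub_left, inner_sub_left]
        ring
      intro u
      obtain ⟨h1', h2'⟩ := (hD2dom (u : H)).mp u.2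
      have hwk : D2 u = D ⟨D ⟨(u : H), h1'⟩, h2'⟩ := by
        simpa using hD2val (u : H) h1' h2' u.2
      have e1 : (D ⟨(u : H), h1'⟩ : H) = D.closure ⟨(u : H), hDT.1 h1'⟩ := hDT.2 rfl
      have e2 : (D ⟨D ⟨(u : H), h1'⟩, h2'⟩ : H) =
          D.closure ⟨(D ⟨(u : H), h1'⟩ : H), hDT.1 h2'⟩ := hDT.2 rfl
      rw [inner_add_right, hwk, e2, hvT ⟨_, hDT.1 h2'⟩]
      have e3 : (inner ℂ ((y : H) - (x : H)) (D ⟨(u : H), h1'⟩ : H) : ℂ) =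
          Complex.I * inner ℂ ((y : H) - (x : H)) (u : H) := by
        rw [e1, hvT ⟨_, hDT.1 h1'⟩]
      rw [show ((⟨(D ⟨(u : H), h1'⟩ : H), hDT.1 h2'⟩ : D.closure.domain) : H) =
        (D ⟨(u : H), h1'⟩ : H) from rfl, e3]
      linear_combination (Complex.I_mul_I) * (inner ℂ ((y : H) - (x : H)) (u : H) : ℂ)
    have hyx : (y : H) = (x : H) := by
      have := sub_eq_zero.mp hveq
      exact this
    have hz : (D.closure.adjoint y : H) = D.closure x := by
      have h6 := hx
      rw [hyx] at h6
      exact (add_right_cancel h6).symm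
    have hpe : p = ((x : H), (D.closure x : H)) :=
      Prod.ext (hy1.symm.trans hyx) (hy2.symm.trans hz)
    rw [hpe]
    exact D.closure.mem_graph x
  exact LinearPMap.isSelfAdjoint_def.mpr (le_antisymm h2 h1)
end
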